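/- Let (M; ∨, ∧, ⊕, ⊖, 0) be a wEMV-algebra, and define M₁ := {x ∈ M : x ≤ a for some idempotent a ∈ M} and M₂ := {x ∈ M : x ∧ a = 0 for every idempotent a ∈ M}. Then M₁ and M₂ contain 0 and are closed under ∨, ∧, ⊕ and ⊖ (so both are wEMV-subalgebras of M, M₂ having no nonzero idempotent). Moreover: (a) if x ∈ M₁ and y ∈ M₂, then x ∧ y = 0 and x ⊕ y = x ∨ y; (b) if x₁, y₁ ∈ M₁ and x₂, y₂ ∈ M₂ and x₁ ∨ x₂ = y₁ ∨ y₂, then x₁ = y₁ and x₂ = y₂; the same conclusion holds if x₁ ⊕ x₂ = y₁ ⊕ y₂. -/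
import Mathlib


universe u

class WEMV (M : Type u) extends DistribLattice M, Zero M where
  oplus : M → M → M
  ominus : M → M → M
  zero_le : ∀ x : M, 0 ≤ x
  oplus_comm : ∀ x y : M, oplus x y = oplus y x
  oplus_assoc : ∀ x y z : M, oplus (oplus x y) z = oplus x (oplus y z)
  oplus_zero : ∀ x : M, oplus x 0 = x
  ominus_oplus_le : ∀ x y : M, ominus (oplus x y) x ≤ y
  oplus_ominus : ∀ x y : M, oplus x (ominus y x) = x ⊔ y
  ominus_inf : ∀ x y : M, ominus x (x ⊓ y) = ominus x y
  ominus_ominus : ∀ x z : M, ominus z (ominus z x) = x ⊓ z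
  ominus_sup : ∀ x y z : M, ominus z (x ⊔ y) = ominus z x ⊓ ominus z y
  inf_ominus : ∀ x y z : M, ominus (x ⊓ y) z = ominus x z ⊓ ominus y z
  ominus_oplus_assoc : ∀ x y z : M, ominus x (oplus y z) = ominus (ominus x y) z
  oplus_sup : ∀ x y z : M, oplus x (y ⊔ z) = oplus x y ⊔ oplus x z

open WEMV

variable {M : Type u} [WEMV M]

lemma w_eq_zero {x : M} (h : x ≤ 0) : x = 0 := le_antisymm h (zero_le x)

lemma w_zero_oplus (x : M) : oplus (0 : M) x = x := by
  rw [oplus_comm]; exact oplus_zero x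

lemma w_oplus_le_right {x y z : M} (h : y ≤ z) : oplus x y ≤ oplus x z := by
  have h2 := oplus_sup x y z
  rw [sup_eq_right.mpr h] at h2
  rw [h2]; exact le_sup_left

lemma w_oplus_le_left {x y z : M} (h : x ≤ y) : oplus x z ≤ oplus y z := by
  rw [oplus_comm x z, oplus_comm y z]; exact w_oplus_le_right h

lemma w_oplus_mono {a b c d : M} (h1 : a ≤ c) (h2 : b ≤ d) : oplus a b ≤ oplus c d :=
  le_trans (w_oplus_le_left h1) (w_oplus_le_right h2)

lemma w_le_oplus_left (x y : M) : x ≤ oplus x y := by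
  conv_lhs => rw [← oplus_zero x]
  exact w_oplus_le_right (zero_le y)

lemma w_le_oplus_right (x y : M) : y ≤ oplus x y := by
  rw [oplus_comm]; exact w_le_oplus_left y x

lemma w_ominus_zero (x : M) : ominus x 0 = x := by
  have h := oplus_ominus (0 : M) x
  rw [w_zero_oplus] at h
  exact h.trans (sup_eq_right.mpr (zero_le x))

lemma w_ominus_le_left {x y z : M} (h : x ≤ y) : ominus x z ≤ ominus y z := by
  have h2 := inf_ominus x y z
  rw [inf_eq_left.mpr h] at h2
  rw [h2]; exact inf_le_right

lemma w_ominus_le_self (x y : M) : ominus x y ≤ x :=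
  le_trans (w_ominus_le_left (w_le_oplus_right y x)) (ominus_oplus_le y x)

lemma w_ominus_of_inf_zero {x y : M} (h : x ⊓ y = 0) : ominus x y = x := by
  rw [← ominus_inf x y, h, w_ominus_zero]

lemma w_oplus_of_inf_zero {x y : M} (h : x ⊓ y = 0) : oplus x y = x ⊔ y := by
  have h2 := oplus_ominus x y
  rwa [w_ominus_of_inf_zero (by rw [inf_comm]; exact h)] at h2

lemma w_inf_oplus_le (a x y : M) : a ⊓ oplus x y ≤ oplus (a ⊓ x) (a ⊓ y) := by
  set t := a ⊓ oplus x y with ht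
  have hta : t ≤ a := inf_le_left
  have htxy : t ≤ oplus x y := inf_le_right
  have h1 : ominus t x ≤ a ⊓ y :=
    le_inf (le_trans (w_ominus_le_self t x) hta)
      (le_trans (w_ominus_le_left htxy) (ominus_oplus_le x y))
  have heq : ominus t (a ⊓ x) = ominus t x := by
    rw [← ominus_inf t (a ⊓ x), ← ominus_inf t x, ← inf_assoc, inf_eq_left.mpr hta]
  have h2 : t ≤ oplus (a ⊓ x) (ominus t (a ⊓ x)) := by
    rw [oplus_ominus]; exact le_sup_right
  refine le_trans h2 ?_
  rw [heq]
  exact w_oplus_le_right h1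

lemma w_idem_oplus {a b : M} (ha : oplus a a = a) (hb : oplus b b = b) :
    oplus (oplus a b) (oplus a b) = oplus a b := by
  rw [oplus_assoc a b (oplus a b), ← oplus_assoc b a b, oplus_comm b a,
    oplus_assoc a b b, hb, ← oplus_assoc, ha]

lemma w_aux_inf_zero {x y : M} (hx : ∃ a : M, oplus a a = a ∧ x ≤ a)
    (hy : ∀ a : M, oplus a a = a → y ⊓ a = 0) : x ⊓ y = 0 := by
  obtain ⟨a, ha, hxa⟩ := hx
  have h : x ⊓ y ≤ y ⊓ a := le_inf inf_le_right (le_trans inf_le_left hxa)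
  rw [hy a ha] at h
  exact w_eq_zero h

theorem stmt16 {M : Type u} [WEMV M] :
    let M₁ : Set M := {x | ∃ a : M, oplus a a = a ∧ x ≤ a}
    let M₂ : Set M := {x | ∀ a : M, oplus a a = a → x ⊓ a = 0}
    ((0 : M) ∈ M₁ ∧ (0 : M) ∈ M₂) ∧
    (∀ x ∈ M₁, ∀ y ∈ M₁, x ⊔ y ∈ M₁ ∧ x ⊓ y ∈ M₁ ∧ oplus x y ∈ M₁ ∧ ominus x y ∈ M₁) ∧
    (∀ x ∈ M₂, ∀ y ∈ M₂, x ⊔ y ∈ M₂ ∧ x ⊓ y ∈ M₂ ∧ oplus x y ∈ M₂ ∧ ominus x y ∈ M₂) ∧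
    (∀ x ∈ M₂, oplus x x = x → x = 0) ∧
    (∀ x ∈ M₁, ∀ y ∈ M₂, x ⊓ y = 0 ∧ oplus x y = x ⊔ y) ∧
    (∀ x₁ ∈ M₁, ∀ y₁ ∈ M₁, ∀ x₂ ∈ M₂, ∀ y₂ ∈ M₂,
      (x₁ ⊔ x₂ = y₁ ⊔ y₂ → x₁ = y₁ ∧ x₂ = y₂) ∧
      (oplus x₁ x₂ = oplus y₁ y₂ → x₁ = y₁ ∧ x₂ = y₂)) := by
  intro M₁ M₂
  have hM1 : ∀ x : M, x ∈ M₁ ↔ ∃ a : M, oplus a a = a ∧ x ≤ a := fun x => Iff.rfl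
  have hM2 : ∀ x : M, x ∈ M₂ ↔ ∀ a : M, oplus a a = a → x ⊓ a = 0 := fun x => Iff.rfl
  refine ⟨⟨⟨0, oplus_zero 0, le_refl 0⟩, fun a _ => w_eq_zero inf_le_left⟩, ?_, ?_, ?_, ?_, ?_⟩
  · -- M₁ closure
    rintro x ⟨a, ha, hxa⟩ y ⟨b, hb, hyb⟩
    have hc := w_idem_oplus ha hb
    have hac : a ≤ oplus a b := w_le_oplus_left a b
    have hbc : b ≤ oplus a b := w_le_oplus_right a b
    exact ⟨⟨oplus a b, hc, sup_le (hxa.trans hac) (hyb.trans hbc)⟩,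
      ⟨a, ha, inf_le_left.trans hxa⟩,
      ⟨oplus a b, hc, w_oplus_mono hxa hyb⟩,
      ⟨a, ha, (w_ominus_le_self x y).trans hxa⟩⟩
  · -- M₂ closure
    intro x hx y hy
    refine ⟨?_, ?_, ?_, ?_⟩
    · intro a ha
      rw [inf_sup_right, hx a ha, hy a ha, sup_idem]
    · intro a ha
      exact w_eq_zero (le_trans (inf_le_inf_right a inf_le_left) (le_of_eq (hx a ha)))
    · intro a ha
      apply w_eq_zero
      rw [inf_comm]
      have h := w_inf_oplus_le a x y
      rw [inf_comm a x, inf_comm a y, hx a ha, hy a ha, oplus_zero] at h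
      exact h
    · intro a ha
      exact w_eq_zero (le_trans (inf_le_inf_right a (w_ominus_le_self x y)) (le_of_eq (hx a ha)))
  · -- M₂ has no nonzero idempotent
    intro x hx h
    have := hx x h
    rwa [inf_idem] at this
  · -- part (a)
    intro x hx y hy
    have h0 : x ⊓ y = 0 := w_aux_inf_zero hx hy
    exact ⟨h0, w_oplus_of_inf_zero h0⟩
  · -- part (b)
    rintro x₁ hx1 y₁ hy1 x₂ hx2 y₂ hy2
    obtain ⟨a, ha, hx1a⟩ := hx1
    obtain ⟨b, hb, hy1b⟩ := hy1
    have hc := w_idem_oplus ha hb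
    set c := oplus a b with hcdef
    have hx1c : x₁ ≤ c := hx1a.trans (w_le_oplus_left a b)
    have hy1c : y₁ ≤ c := hy1b.trans (w_le_oplus_right a b)
    have hx2c : x₂ ⊓ c = 0 := hx2 c hc
    have hy2c : y₂ ⊓ c = 0 := hy2 c hc
    have key : ∀ u v : M, u ≤ c → v ⊓ c = 0 →
        (u ⊔ v) ⊓ c = u ∧ ominus (u ⊔ v) u = v := by
      intro u v huc hvc
      have huv : u ⊓ v = 0 := by
        apply w_eq_zero
        have h : u ⊓ v ≤ v ⊓ c := le_inf inf_le_right (le_trans inf_le_left huc)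
        rwa [hvc] at h
      constructor
      · rw [inf_sup_right, inf_eq_left.mpr huc, hvc, sup_eq_left.mpr (zero_le u)]
      · apply le_antisymm
        · rw [← w_oplus_of_inf_zero huv]
          exact ominus_oplus_le u v
        · conv_lhs => rw [← w_ominus_of_inf_zero (show v ⊓ u = 0 by rw [inf_comm]; exact huv)]
          exact w_ominus_le_left le_sup_right
    have sup_case : x₁ ⊔ x₂ = y₁ ⊔ y₂ → x₁ = y₁ ∧ x₂ = y₂ := by
      intro heq
      obtain ⟨hx1', hx2'⟩ := key x₁ x₂ hx1c hx2c
      obtain ⟨hy1', hy2'⟩ := key y₁ y₂ hy1c hy2c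
      have h1 : x₁ = y₁ := by rw [← hx1', ← hy1', heq]
      refine ⟨h1, ?_⟩
      rw [← hx2', ← hy2', heq, h1]
    refine ⟨sup_case, fun heq => sup_case ?_⟩
    rw [← w_oplus_of_inf_zero (w_aux_inf_zero ⟨a, ha, hx1a⟩ hx2),
      ← w_oplus_of_inf_zero (w_aux_inf_zero ⟨b, hb, hy1b⟩ hy2), heq]
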